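/- Let n be divisible by k, let V = X ∪ Y be a partition with n/k − |X| odd, and let H be the k-graph on V whose edges are all k-subsets intersecting X in an odd number of vertices. Then H has no perfect matching. -/

import Mathlib

/-- Parity divisibility barrier: if `n/k - |X|` is odd and every edge meets `X` in an odd
number of vertices, there is no perfect matching. -/
theorem stmt_3 {V : Type*} [Fintype V] [DecidableEq V] (k n : ℕ) (hk : 0 < k) (hkn : k ∣ n)
    (hn : Fintype.card V = n) (X : Finset V)
    (hodd : Odd ((n : ℤ) / (k : ℤ) - (X.card : ℤ)))
    (M : Finset (Finset V))
    (hedge : ∀ e ∈ M, e.card = k ∧ Odd (e ∩ X).card)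
    (hdisj : (M : Set (Finset V)).Pairwise fun e f => Disjoint e f) :
    M.biUnion id ≠ Finset.univ := by
  intro h
  have hcard : (M.biUnion id).card = n := by rw [h, Finset.card_univ, hn]
  have hsum : ∑ e ∈ M, e.card = n := by
    rw [← hcard]
    exact (Finset.card_biUnion (fun e he f hf hef => hdisj he hf hef)).symm
  have hMk : M.card * k = n := by
    rw [Finset.sum_congr rfl (fun e he => (hedge e he).1), Finset.sum_const,
      smul_eq_mul] at hsum
    exact hsum
  have hX : X = M.biUnion (fun e => e ∩ X) := by
    ext x
    simp only [Finset.mem_biUnion, Finset.mem_inter]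
    constructor
    · intro hx
      have : x ∈ M.biUnion id := by rw [h]; exact Finset.mem_univ x
      obtain ⟨e, he, hxe⟩ := Finset.mem_biUnion.1 this
      exact ⟨e, he, hxe, hx⟩
    · rintro ⟨e, _, _, hx⟩; exact hx
  have hXcard : X.card = ∑ e ∈ M, (e ∩ X).card := by
    conv_lhs => rw [hX]
    rw [Finset.card_biUnion]
    exact fun e he f hf hef =>
      (hdisj he hf hef).mono Finset.inter_subset_left Finset.inter_subset_left
  have hpar : X.card % 2 = M.card % 2 := by
    rw [hXcard, Finset.sum_nat_mod,
      Finset.sum_congr rfl (fun e he => Nat.odd_iff.1 (hedge e he).2),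
      Finset.sum_const, smul_eq_mul, mul_one]
  have hdiv : n / k = M.card := by rw [← hMk, Nat.mul_div_cancel _ hk]
  have hzdiv : (n : ℤ) / (k : ℤ) = ((n / k : ℕ) : ℤ) := (Int.natCast_ediv n k).symm
  rw [hzdiv, hdiv, Int.odd_iff] at hodd
  omega
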